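/- Let $d_S,d_I>0$, let $\mathcal{L}$ be quasi-positive, irreducible, with columns summing to zero, and let $\alpha$ be its positive null vector normalized by $\sum_j\alpha_j=1$. Suppose $(S,I)\in\mathbb{R}^n_{>0}\times\mathbb{R}^n_{>0}$ is an equilibrium of the patch SIS system, i.e. $d_S\mathcal{L}S - \beta\circ S\circ I + \gamma\circ I = 0$ and $d_I\mathcal{L}I + \beta\circ S\circ I - \gamma\circ I = 0$, with $\sum_j(S_j+I_j)=N$. Then there exists $\kappa^*>0$ with $d_S S + d_I I = \kappa^* N\alpha$, and moreover $\kappa^* N = d_S N + (d_I - d_S)\sum_j I_j$. -/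

import Mathlib

/-- A square matrix is irreducible if for every nonempty proper coordinate subset `s`
there is a nonzero entry `L i j` with `j ∈ s` and `i ∉ s`. -/
def Matrix.IsIrreducible' {n : ℕ} (L : Matrix (Fin n) (Fin n) ℝ) : Prop :=
  ∀ s : Finset (Fin n), s.Nonempty → s ≠ Finset.univ →
    ∃ i ∉ s, ∃ j ∈ s, L i j ≠ 0

/-- For a positive endemic equilibrium `(S, I)` of the patch SIS system,
the combination `d_S S + d_I I` is a positive multiple `κ* N α` of the Perron vector,
with `κ* N = d_S N + (d_I - d_S) ∑ I_j`. -/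
theorem equilibrium_kappa {n : ℕ}
    (L : Matrix (Fin n) (Fin n) ℝ)
    (hquasi : ∀ i j, i ≠ j → 0 ≤ L i j)
    (hirr : L.IsIrreducible')
    (hcol : ∀ j, ∑ i, L i j = 0)
    (α : Fin n → ℝ) (hα0 : L.mulVec α = 0) (hαpos : ∀ j, 0 < α j)
    (hαsum : ∑ j, α j = 1)
    (dS dI N : ℝ) (hdS : 0 < dS) (hdI : 0 < dI) (hN : 0 < N)
    (β γ S I : Fin n → ℝ)
    (hβ : ∀ j, 0 < β j) (hγ : ∀ j, 0 < γ j)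
    (hSpos : ∀ j, 0 < S j) (hIpos : ∀ j, 0 < I j)
    (heqS : ∀ i, dS * (∑ j, L i j * S j) - β i * S i * I i + γ i * I i = 0)
    (heqI : ∀ i, dI * (∑ j, L i j * I j) + β i * S i * I i - γ i * I i = 0)
    (htot : ∑ j, (S j + I j) = N) :
    ∃ κ : ℝ, 0 < κ ∧ (∀ j, dS * S j + dI * I j = κ * N * α j) ∧
      κ * N = dS * N + (dI - dS) * ∑ j, I j := by
  have hn : 0 < n := by
    rcases Nat.eq_zero_or_pos n with h | h
    · subst h; simp at htot; linarith
    · exact h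
  set v : Fin n → ℝ := fun j => dS * S j + dI * I j with hv
  have hvpos : ∀ j, 0 < v j := fun j =>
    add_pos (mul_pos hdS (hSpos j)) (mul_pos hdI (hIpos j))
  have hLv : ∀ i, ∑ j, L i j * v j = 0 := by
    intro i
    have h1 : ∑ j, L i j * v j
        = dS * (∑ j, L i j * S j) + dI * (∑ j, L i j * I j) := by
      rw [Finset.mul_sum, Finset.mul_sum, ← Finset.sum_add_distrib]
      exact Finset.sum_congr rfl fun j _ => by simp only [hv]; ring
    rw [h1]
    have := heqS i; have := heqI i; linarith
  have hLα : ∀ i, ∑ j, L i j * α j = 0 := by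
    intro i
    have := congrFun hα0 i
    simpa [Matrix.mulVec, dotProduct] using this
  obtain ⟨j0, -, hj0⟩ := Finset.exists_min_image Finset.univ (fun j => v j / α j)
    ⟨⟨0, hn⟩, Finset.mem_univ _⟩
  set m := v j0 / α j0 with hm
  set w : Fin n → ℝ := fun j => v j - m * α j with hw
  have hwnn : ∀ j, 0 ≤ w j := by
    intro j
    have h := hj0 j (Finset.mem_univ j)
    have h2 : m * α j ≤ v j := (le_div_iff₀ (hαpos j)).mp h
    simp only [hw]; linarith
  have hw0 : w j0 = 0 := by
    have : m * α j0 = v j0 := by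
      rw [hm, div_mul_cancel₀ _ (hαpos j0).ne']
    simp only [hw]; linarith
  have hLw : ∀ i, ∑ j, L i j * w j = 0 := by
    intro i
    have h1 : ∑ j, L i j * w j
        = (∑ j, L i j * v j) - m * ∑ j, L i j * α j := by
      rw [Finset.mul_sum, ← Finset.sum_sub_distrib]
      exact Finset.sum_congr rfl fun j _ => by simp only [hw]; ring
    rw [h1, hLv i, hLα i]; ring
  have hweq : ∀ j, w j = 0 := by
    by_contra hcon
    push_neg at hcon
    obtain ⟨k, hk⟩ := hcon
    set t : Finset (Fin n) := Finset.univ.filter (fun j => w j ≠ 0) with ht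
    have htne : t.Nonempty := ⟨k, by simp [ht, hk]⟩
    have hj0t : j0 ∉ t := by simp [ht, hw0]
    have htuniv : t ≠ Finset.univ := fun h => hj0t (h ▸ Finset.mem_univ j0)
    obtain ⟨i, hit, j, hjt, hLij⟩ := hirr t htne htuniv
    have hterm : ∀ k ∈ Finset.univ, 0 ≤ L i k * w k := by
      intro k _
      by_cases hk0 : w k = 0
      · simp [hk0]
      · have hkt : k ∈ t := by simp [ht, hk0]
        have hik : i ≠ k := fun h => hit (h ▸ hkt)
        exact mul_nonneg (hquasi i k hik) (hwnn k)
    have hz := (Finset.sum_eq_zero_iff_of_nonneg hterm).mp (hLw i) j (Finset.mem_univ j)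
    have hwj : w j ≠ 0 := by simpa [ht] using hjt
    rcases mul_eq_zero.mp hz with h | h
    · exact hLij h
    · exact hwj h
  have hveq : ∀ j, v j = m * α j := by
    intro j
    have := hweq j
    simp only [hw] at this
    linarith
  have hm0 : 0 < m := div_pos (hvpos j0) (hαpos j0)
  have hsumv : ∑ j, v j = m := by
    rw [show ∑ j, v j = ∑ j, m * α j from Finset.sum_congr rfl fun j _ => hveq j,
      ← Finset.mul_sum, hαsum, mul_one]
  refine ⟨m / N, div_pos hm0 hN, ?_, ?_⟩
  · intro j
    rw [div_mul_cancel₀ _ hN.ne']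
    exact hveq j
  · rw [div_mul_cancel₀ _ hN.ne', ← hsumv]
    have h2 : ∑ j, v j = dS * ∑ j, (S j + I j) + (dI - dS) * ∑ j, I j := by
      rw [Finset.mul_sum, Finset.mul_sum, ← Finset.sum_add_distrib]
      exact Finset.sum_congr rfl fun j _ => by simp only [hv]; ring
    rw [h2, htot]
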